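/- Let x be a grid state. The only domains p from x to x that decompose as a composition of two empty rectangles are the 2n thin annuli: the n horizontal annuli of height one and the n vertical annuli of width one through the rows and columns of the grid. Each such annulus has a unique decomposition as r₁ ∗ r₂ with r₁ ∈ Rect°(x,y), r₂ ∈ Rect°(y,x). -/

import Mathlib

/-- A (combinatorial) rectangle on the `n × n` torus: distinct columns `a, b`
(left/right edges) and distinct rows `c, d` (bottom/top edges), understood cyclically. -/
def GRect (n : ℕ) := {q : (ZMod n × ZMod n) × ZMod n × ZMod n // q.1.1 ≠ q.1.2 ∧ q.2.1 ≠ q.2.2}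

namespace GRect
variable {n : ℕ}
def a (r : GRect n) : ZMod n := r.1.1.1
def b (r : GRect n) : ZMod n := r.1.1.2
def c (r : GRect n) : ZMod n := r.1.2.1
def d (r : GRect n) : ZMod n := r.1.2.2
end GRect

/-- The rectangle `r` connects the grid state `x` to the grid state `y`. -/
def Connects {n : ℕ} (r : GRect n) (x y : Equiv.Perm (ZMod n)) : Prop :=
  x r.a = r.c ∧ x r.b = r.d ∧ y = x * Equiv.swap r.a r.b

/-- The grid point `(i, j)` lies in the interior of the rectangle `r` (cyclically). -/
def InteriorPt {n : ℕ} (r : GRect n) (i j : ZMod n) : Prop :=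
  0 < (i - r.a).val ∧ (i - r.a).val < (r.b - r.a).val ∧
  0 < (j - r.c).val ∧ (j - r.c).val < (r.d - r.c).val

/-- The rectangle `r` is empty: no point of the grid state `x` lies in its interior. -/
def Empt {n : ℕ} (x : Equiv.Perm (ZMod n)) (r : GRect n) : Prop :=
  ∀ i : ZMod n, ¬ InteriorPt r i (x i)

/-- The cell whose lower-left corner is `(i, j)` is contained in the rectangle `r`. -/
def CellIn {n : ℕ} (r : GRect n) (i j : ZMod n) : Prop :=
  (i - r.a).val < (r.b - r.a).val ∧ (j - r.c).val < (r.d - r.c).val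

instance {n : ℕ} (r : GRect n) (i j : ZMod n) : Decidable (CellIn r i j) :=
  inferInstanceAs (Decidable (_ ∧ _))

/-- The underlying 2-chain of a rectangle: the multiplicity with which each cell
of the torus appears in it. -/
def cellsOf {n : ℕ} (r : GRect n) : ZMod n × ZMod n → ℤ :=
  fun q => if CellIn r q.1 q.2 then 1 else 0

/-- An empty rectangle connecting `x` to `y`: `r ∈ Rect°(x,y)`. -/
def EmptyConnects {n : ℕ} (r : GRect n) (x y : Equiv.Perm (ZMod n)) : Prop :=
  Connects r x y ∧ Empt x r

/-- The decompositions of the 2-chain `p` (a domain from `x` to `z`) as a composite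
`r₁ ∗ r₂` of two empty rectangles, `r₁ ∈ Rect°(x,y)`, `r₂ ∈ Rect°(y,z)`; a decomposition
records the intermediate generator `y` and the two rectangles. -/
def Decomps {n : ℕ} (x z : Equiv.Perm (ZMod n)) (p : ZMod n × ZMod n → ℤ) :
    Set (Equiv.Perm (ZMod n) × GRect n × GRect n) :=
  {t | EmptyConnects t.2.1 x t.1 ∧ EmptyConnects t.2.2 t.1 z ∧
       (fun q => cellsOf t.2.1 q + cellsOf t.2.2 q) = p}

/-- The horizontal annulus of height one through row `c`: the union of the cells
whose row coordinate is `c`. -/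
def rowAnn (n : ℕ) (c : ZMod n) : ZMod n × ZMod n → ℤ :=
  fun q => if q.2 = c then 1 else 0

/-- The vertical annulus of width one through column `c`. -/
def colAnn (n : ℕ) (c : ZMod n) : ZMod n × ZMod n → ℤ :=
  fun q => if q.1 = c then 1 else 0

section Aux

variable {n : ℕ} [NeZero n]

private lemma zsub_aux {t : ZMod n} (ht : t ≠ 0) (u : ZMod n) :
    u.val < t.val ↔ ¬ ((u - t).val < (-t).val) := by
  have h1 : (u - t).val = (u.val + (n - t.val)) % n := by
    rw [sub_eq_add_neg, ZMod.val_add, ZMod.neg_val, if_neg ht]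
  have h2 : (-t).val = n - t.val := by rw [ZMod.neg_val, if_neg ht]
  have htv : 0 < t.val := Nat.pos_of_ne_zero (fun h => ht ((ZMod.val_eq_zero t).mp h))
  have htn : t.val < n := ZMod.val_lt t
  have hun : u.val < n := ZMod.val_lt u
  rcases lt_or_ge u.val t.val with h | h
  · have he : (u.val + (n - t.val)) % n = u.val + (n - t.val) := Nat.mod_eq_of_lt (by omega)
    omega
  · have he : (u.val + (n - t.val)) % n = u.val - t.val := by
      have h3 : u.val + (n - t.val) = (u.val - t.val) + 1 * n := by omega
      rw [h3, Nat.add_mul_mod_self_right, Nat.mod_eq_of_lt (by omega)]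
    omega

private lemma part_aux {c d : ZMod n} (h : c ≠ d) (j : ZMod n) :
    (j - c).val < (d - c).val ↔ ¬ ((j - d).val < (c - d).val) := by
  have ht : d - c ≠ 0 := sub_ne_zero.mpr (Ne.symm h)
  have h2 := zsub_aux ht (j - c)
  rw [show j - c - (d - c) = j - d by ring, show -(d - c) = c - d by ring] at h2
  exact h2

private lemma one_ne_zero'' (hn : 2 ≤ n) : (1 : ZMod n) ≠ 0 := by
  intro h
  have h2 : (n : ℕ) ∣ 1 := (CharP.cast_eq_zero_iff (ZMod n) n 1).mp (by exact_mod_cast h)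
  have := Nat.le_of_dvd one_pos h2
  omega

private lemma val_one' (hn : 2 ≤ n) : (1 : ZMod n).val = 1 := by
  haveI : Fact (1 < n) := ⟨hn⟩
  exact ZMod.val_one n

private lemma self_ne_add_one' (hn : 2 ≤ n) (a : ZMod n) : a ≠ a + 1 := by
  intro h
  exact one_ne_zero'' hn (by linear_combination -h)

private lemma val_sub_pos {u v : ZMod n} (h : u ≠ v) : 0 < (u - v).val :=
  Nat.pos_of_ne_zero fun hh => (sub_ne_zero.mpr h) ((ZMod.val_eq_zero _).mp hh)

private lemma sub_lt_one_iff' (hn : 2 ≤ n) (i a : ZMod n) :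
    (i - a).val < ((a + 1) - a).val ↔ i = a := by
  rw [add_sub_cancel_left, val_one' hn]
  constructor
  · intro h
    exact sub_eq_zero.mp ((ZMod.val_eq_zero _).mp (by omega))
  · rintro rfl
    simp

def mkRect {n : ℕ} (a b c d : ZMod n) (h1 : a ≠ b) (h2 : c ≠ d) : GRect n :=
  ⟨((a, b), (c, d)), h1, h2⟩

private lemma cells_sumA {a b c d : ZMod n} (hn : 2 ≤ n) (hab : a ≠ b) (hcd : c ≠ d)
    (h1 : (b - a).val = 1) (q : ZMod n × ZMod n) :
    cellsOf (mkRect a b c d hab hcd) q + cellsOf (mkRect a b d c hab hcd.symm) q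
      = colAnn n a q := by
  have hc : (q.1 - a).val < (b - a).val ↔ q.1 = a := by
    rw [h1]
    constructor
    · intro h
      exact sub_eq_zero.mp ((ZMod.val_eq_zero _).mp (by omega))
    · rintro rfl; simp
  have hr := part_aux hcd q.2
  simp only [cellsOf, CellIn, mkRect, GRect.a, GRect.b, GRect.c, GRect.d, colAnn]
  by_cases hq1 : q.1 = a <;> by_cases hq2 : (q.2 - c).val < (d - c).val <;> simp_all

private lemma cells_sumB {a b c d : ZMod n} (hn : 2 ≤ n) (hab : a ≠ b) (hcd : c ≠ d)
    (h1 : (d - c).val = 1) (q : ZMod n × ZMod n) :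
    cellsOf (mkRect a b c d hab hcd) q + cellsOf (mkRect b a c d (Ne.symm hab) hcd) q
      = rowAnn n c q := by
  have hc : (q.2 - c).val < (d - c).val ↔ q.2 = c := by
    rw [h1]
    constructor
    · intro h
      exact sub_eq_zero.mp ((ZMod.val_eq_zero _).mp (by omega))
    · rintro rfl; simp
  have hr := part_aux hab q.1
  simp only [cellsOf, CellIn, mkRect, GRect.a, GRect.b, GRect.c, GRect.d, rowAnn]
  by_cases hq1 : q.2 = c <;> by_cases hq2 : (q.1 - a).val < (b - a).val <;> simp_all

end Aux

section Triples

variable {n : ℕ} [NeZero n]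

def vT {n : ℕ} [NeZero n] (hn : 2 ≤ n) (x : Equiv.Perm (ZMod n)) (a : ZMod n) :
    Equiv.Perm (ZMod n) × GRect n × GRect n :=
  (x * Equiv.swap a (a + 1),
   mkRect a (a + 1) (x a) (x (a + 1)) (self_ne_add_one' hn a)
     (x.injective.ne (self_ne_add_one' hn a)),
   mkRect a (a + 1) (x (a + 1)) (x a) (self_ne_add_one' hn a)
     (Ne.symm (x.injective.ne (self_ne_add_one' hn a))))

def hT {n : ℕ} [NeZero n] (hn : 2 ≤ n) (x : Equiv.Perm (ZMod n)) (c : ZMod n) :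
    Equiv.Perm (ZMod n) × GRect n × GRect n :=
  (x * Equiv.swap (x.symm c) (x.symm (c + 1)),
   mkRect (x.symm c) (x.symm (c + 1)) c (c + 1)
     (x.symm.injective.ne (self_ne_add_one' hn c)) (self_ne_add_one' hn c),
   mkRect (x.symm (c + 1)) (x.symm c) c (c + 1)
     (Ne.symm (x.symm.injective.ne (self_ne_add_one' hn c))) (self_ne_add_one' hn c))

lemma vT_mem (hn : 2 ≤ n) (x : Equiv.Perm (ZMod n)) (a : ZMod n) :
    vT hn x a ∈ Decomps x x (colAnn n a) := by
  have hne := self_ne_add_one' hn a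
  have hempt : ∀ (z : Equiv.Perm (ZMod n)) (c d : ZMod n) (h1 : a ≠ a + 1) (h2 : c ≠ d),
      Empt z (mkRect a (a + 1) c d h1 h2) := by
    intro z c d h1 h2 i hint
    obtain ⟨p1, p2, -, -⟩ := hint
    have hia := (sub_lt_one_iff' hn i a).mp p2
    rw [hia] at p1
    simp [mkRect, GRect.a] at p1
  refine ⟨⟨⟨rfl, rfl, rfl⟩, hempt x _ _ hne (x.injective.ne hne)⟩, ⟨⟨?_, ?_, ?_⟩, hempt _ _ _ hne (Ne.symm (x.injective.ne hne))⟩, ?_⟩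
  · show (x * Equiv.swap a (a + 1)) a = x (a + 1)
    rw [Equiv.Perm.mul_apply, Equiv.swap_apply_left]
  · show (x * Equiv.swap a (a + 1)) (a + 1) = x a
    rw [Equiv.Perm.mul_apply, Equiv.swap_apply_right]
  · show x = x * Equiv.swap a (a + 1) * Equiv.swap a (a + 1)
    rw [mul_assoc, Equiv.swap_mul_self, mul_one]
  · funext q
    exact cells_sumA hn hne (x.injective.ne hne) (by rw [add_sub_cancel_left, val_one' hn]) q

lemma hT_mem (hn : 2 ≤ n) (x : Equiv.Perm (ZMod n)) (c : ZMod n) :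
    hT hn x c ∈ Decomps x x (rowAnn n c) := by
  have hne := self_ne_add_one' hn c
  have hane : x.symm c ≠ x.symm (c + 1) := x.symm.injective.ne hne
  have hempt : ∀ (z : Equiv.Perm (ZMod n)) (a b : ZMod n) (h1 : a ≠ b) (h2 : c ≠ c + 1),
      Empt z (mkRect a b c (c + 1) h1 h2) := by
    intro z a b h1 h2 i hint
    obtain ⟨-, -, p1, p2⟩ := hint
    have hia := (sub_lt_one_iff' hn (z i) c).mp p2
    rw [hia] at p1
    simp [mkRect, GRect.c] at p1
  refine ⟨⟨⟨?_, ?_, rfl⟩, hempt x _ _ hane hne⟩, ⟨⟨?_, ?_, ?_⟩, hempt _ _ _ (Ne.symm hane) hne⟩, ?_⟩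
  · exact x.apply_symm_apply c
  · exact x.apply_symm_apply (c + 1)
  · show (x * Equiv.swap (x.symm c) (x.symm (c + 1))) (x.symm (c + 1)) = c
    rw [Equiv.Perm.mul_apply, Equiv.swap_apply_right, x.apply_symm_apply]
  · show (x * Equiv.swap (x.symm c) (x.symm (c + 1))) (x.symm c) = c + 1
    rw [Equiv.Perm.mul_apply, Equiv.swap_apply_left, x.apply_symm_apply]
  · show x = x * Equiv.swap (x.symm c) (x.symm (c + 1)) * Equiv.swap (x.symm (c + 1)) (x.symm c)
    rw [Equiv.swap_comm (x.symm (c + 1)) (x.symm c), mul_assoc, Equiv.swap_mul_self, mul_one]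
  · funext q
    exact cells_sumB hn hane hne (by rw [add_sub_cancel_left, val_one' hn]) q

end Triples

lemma decomps_char {n : ℕ} [NeZero n] (hn : 2 ≤ n) (x : Equiv.Perm (ZMod n))
    (p : ZMod n × ZMod n → ℤ) (t : Equiv.Perm (ZMod n) × GRect n × GRect n)
    (ht : t ∈ Decomps x x p) :
    (∃ a, p = colAnn n a ∧ t = vT hn x a) ∨ (∃ c, p = rowAnn n c ∧ t = hT hn x c) := by
  obtain ⟨y, ⟨⟨⟨a1, b1⟩, c1, d1⟩, hab1, hcd1⟩, ⟨⟨⟨a2, b2⟩, c2, d2⟩, hab2, hcd2⟩⟩ := t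
  obtain ⟨⟨⟨hc1, hd1, hy1⟩, he1⟩, ⟨⟨hc2, hd2, hy2⟩, he2⟩, hp⟩ := ht
  simp only [GRect.a, GRect.b, GRect.c, GRect.d] at hc1 hd1 hy1 hc2 hd2 hy2
  have hs : Equiv.swap a1 b1 = Equiv.swap a2 b2 := by
    have h := hy2
    rw [hy1, mul_assoc] at h
    have h2 : x * 1 = x * (Equiv.swap a1 b1 * Equiv.swap a2 b2) := by rw [mul_one]; exact h
    have h4 : Equiv.swap a1 b1 * Equiv.swap a2 b2 = 1 := (mul_left_cancel h2).symm
    rw [mul_eq_one_iff_eq_inv, Equiv.swap_inv] at h4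
    exact h4
  have key : b2 = Equiv.swap a1 b1 a2 := by rw [hs, Equiv.swap_apply_left]
  rw [Equiv.swap_apply_def] at key
  split_ifs at key with hA hB
  · -- case A : a2 = a1, b2 = b1 (vertical annulus)
    have h := hA.symm; subst h
    have h := key.symm; subst h
    rw [hy1, Equiv.Perm.mul_apply, Equiv.swap_apply_left] at hc2
    rw [hy1, Equiv.Perm.mul_apply, Equiv.swap_apply_right] at hd2
    subst hc1; subst hd1; subst hc2; subst hd2
    have hcols : ∀ i, 0 < (i - a1).val → (i - a1).val < (b1 - a1).val → False := by
      intro i hp1 hp2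
      have hia : i ≠ a1 := by rintro rfl; simp at hp1
      have hib : i ≠ b1 := by rintro rfl; exact lt_irrefl _ hp2
      have hyi : y i = x i := by
        rw [hy1, Equiv.Perm.mul_apply, Equiv.swap_apply_of_ne_of_ne hia hib]
      have hjc0 : 0 < (x i - x a1).val := val_sub_pos (x.injective.ne hia)
      have hjd0 : 0 < (x i - x b1).val := val_sub_pos (x.injective.ne hib)
      by_cases hrow : (x i - x a1).val < (x b1 - x a1).val
      · exact he1 i ⟨hp1, hp2, hjc0, hrow⟩
      · have h3 : (x i - x b1).val < (x a1 - x b1).val := by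
          by_contra h4
          exact hrow ((part_aux hcd1 (x i)).mpr h4)
        refine he2 i ?_
        rw [hyi]
        exact ⟨hp1, hp2, hjd0, h3⟩
    have hb1 : (b1 - a1).val = 1 := by
      have hpos : 0 < (b1 - a1).val := val_sub_pos (Ne.symm hab1)
      by_contra hne1
      refine hcols (a1 + 1) ?_ ?_ <;> rw [add_sub_cancel_left, val_one' hn] <;> omega
    have hB1 : b1 = a1 + 1 := by
      have h2 : (b1 - a1).val = (1 : ZMod n).val := by rw [hb1, val_one' hn]
      have h3 := ZMod.val_injective n h2
      rw [sub_eq_iff_eq_add] at h3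
      rw [h3, add_comm]
    subst hB1
    subst hy1
    left
    refine ⟨a1, ?_, rfl⟩
    rw [← hp]
    funext q
    exact cells_sumA hn hab1 hcd1 (by rw [add_sub_cancel_left, val_one' hn]) q
  · -- case B : a2 = b1, b2 = a1 (horizontal annulus)
    have h := hB.symm; subst h
    have h := key.symm; subst h
    rw [hy1, Equiv.Perm.mul_apply, Equiv.swap_apply_right] at hc2
    rw [hy1, Equiv.Perm.mul_apply, Equiv.swap_apply_left] at hd2
    have h := (hc1.symm.trans hc2); subst h
    have h := (hd1.symm.trans hd2); subst h
    have hrows : ∀ j, 0 < (j - c1).val → (j - c1).val < (d1 - c1).val → False := by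
      intro j hq1 hq2
      have hjc : j ≠ c1 := by rintro rfl; simp at hq1
      have hjd : j ≠ d1 := by rintro rfl; exact lt_irrefl _ hq2
      have hx : x (x.symm j) = j := x.apply_symm_apply j
      have hia : x.symm j ≠ a1 := by
        intro h; rw [h, hc1] at hx; exact hjc hx.symm
      have hib : x.symm j ≠ b1 := by
        intro h; rw [h, hd1] at hx; exact hjd hx.symm
      have hyi : y (x.symm j) = x (x.symm j) := by
        rw [hy1, Equiv.Perm.mul_apply, Equiv.swap_apply_of_ne_of_ne hia hib]
      have h0a : 0 < (x.symm j - a1).val := val_sub_pos hia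
      have h0b : 0 < (x.symm j - b1).val := val_sub_pos hib
      by_cases hcol : (x.symm j - a1).val < (b1 - a1).val
      · refine he1 (x.symm j) ⟨h0a, hcol, ?_, ?_⟩ <;> rw [hx] <;> assumption
      · have h3 : (x.symm j - b1).val < (a1 - b1).val := by
          by_contra h4
          exact hcol ((part_aux hab1 (x.symm j)).mpr h4)
        refine he2 (x.symm j) ?_
        rw [hyi, hx]
        exact ⟨h0b, h3, hq1, hq2⟩
    have hdv : (d1 - c1).val = 1 := by
      have hpos : 0 < (d1 - c1).val := val_sub_pos (Ne.symm hcd1)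
      by_contra hne1
      refine hrows (c1 + 1) ?_ ?_ <;> rw [add_sub_cancel_left, val_one' hn] <;> omega
    have hD1 : d1 = c1 + 1 := by
      have h2 : (d1 - c1).val = (1 : ZMod n).val := by rw [hdv, val_one' hn]
      have h3 := ZMod.val_injective n h2
      rw [sub_eq_iff_eq_add] at h3
      rw [h3, add_comm]
    subst hD1
    have ha1 : a1 = x.symm c1 := (Equiv.eq_symm_apply x).mpr hc1
    have hb1 : b1 = x.symm (c1 + 1) := (Equiv.eq_symm_apply x).mpr hd1
    subst ha1; subst hb1
    subst hy1
    right
    refine ⟨c1, ?_, rfl⟩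
    rw [← hp]
    funext q
    exact cells_sumB hn hab1 hcd1 (by rw [add_sub_cancel_left, val_one' hn]) q
  · exact absurd key.symm hab2

lemma rowAnn_inj {n : ℕ} : Function.Injective (rowAnn n) := by
  intro c c' h
  by_contra hcc
  have h2 := congrFun h (0, c)
  simp [rowAnn, hcc] at h2

lemma colAnn_inj {n : ℕ} : Function.Injective (colAnn n) := by
  intro c c' h
  by_contra hcc
  have h2 := congrFun h (c, 0)
  simp [colAnn, hcc] at h2

lemma colAnn_ne_rowAnn {n : ℕ} [NeZero n] (hn : 2 ≤ n) (a c : ZMod n) :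
    colAnn n a ≠ rowAnn n c := by
  intro h
  have h2 := congrFun h (a, c + 1)
  simp [colAnn, rowAnn, Ne.symm (self_ne_add_one' hn c)] at h2

theorem Decomps_self' (n : ℕ) [NeZero n] (hn : 2 ≤ n) (x : Equiv.Perm (ZMod n)) :
    {p : ZMod n × ZMod n → ℤ | (Decomps x x p).Nonempty}
        = Set.range (rowAnn n) ∪ Set.range (colAnn n) ∧
    (Set.range (rowAnn n) ∪ Set.range (colAnn n)).ncard = 2 * n ∧
    (∀ p, (Decomps x x p).Nonempty → (Decomps x x p).ncard = 1) := by
  have hset : {p : ZMod n × ZMod n → ℤ | (Decomps x x p).Nonempty}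
      = Set.range (rowAnn n) ∪ Set.range (colAnn n) := by
    ext p
    simp only [Set.mem_setOf_eq, Set.mem_union, Set.mem_range]
    constructor
    · rintro ⟨t, ht⟩
      rcases decomps_char hn x p t ht with ⟨a, hp, -⟩ | ⟨c, hp, -⟩
      · exact Or.inr ⟨a, hp.symm⟩
      · exact Or.inl ⟨c, hp.symm⟩
    · rintro (⟨c, rfl⟩ | ⟨a, rfl⟩)
      · exact ⟨hT hn x c, hT_mem hn x c⟩
      · exact ⟨vT hn x a, vT_mem hn x a⟩
  refine ⟨hset, ?_, ?_⟩
  · have hdisj : Disjoint (Set.range (rowAnn n)) (Set.range (colAnn n)) := by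
      rw [Set.disjoint_left]
      rintro p ⟨c, rfl⟩ ⟨a, hpa⟩
      exact colAnn_ne_rowAnn hn a c hpa
    have hcard : ∀ f : ZMod n → (ZMod n × ZMod n → ℤ), Function.Injective f →
        (Set.range f).ncard = n := by
      intro f hf
      rw [← Nat.card_coe_set_eq, Nat.card_range_of_injective hf, Nat.card_zmod]
    rw [Set.ncard_union_eq hdisj (Set.finite_range _) (Set.finite_range _),
      hcard _ rowAnn_inj, hcard _ colAnn_inj]
    omega
  · rintro p ⟨t, ht⟩
    have hone : Decomps x x p = {t} := by
      ext t'
      simp only [Set.mem_singleton_iff]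
      constructor
      · intro ht'
        rcases decomps_char hn x p t ht with ⟨a, hpa, rfl⟩ | ⟨c, hpc, rfl⟩
        · rcases decomps_char hn x p t' ht' with ⟨a', hpa', rfl⟩ | ⟨c', hpc', rfl⟩
          · rw [colAnn_inj (hpa'.symm.trans hpa)]
          · exact absurd (hpa.symm.trans hpc') (colAnn_ne_rowAnn hn a c')
        · rcases decomps_char hn x p t' ht' with ⟨a', hpa', rfl⟩ | ⟨c', hpc', rfl⟩
          · exact absurd (hpa'.symm.trans hpc) (colAnn_ne_rowAnn hn a' c)
          · rw [rowAnn_inj (hpc'.symm.trans hpc)]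
      · rintro rfl; exact ht
    rw [hone, Set.ncard_singleton]


/-- For a grid state `x`, the only domains from `x` to itself decomposing as a composite
of two empty rectangles are the `2n` thin annuli (the `n` horizontal annuli of height one
and the `n` vertical annuli of width one), and each of them admits exactly one such
decomposition. -/
theorem Decomps_self (n : ℕ) [NeZero n] (hn : 2 ≤ n) (x : Equiv.Perm (ZMod n)) :
    {p : ZMod n × ZMod n → ℤ | (Decomps x x p).Nonempty}
        = Set.range (rowAnn n) ∪ Set.range (colAnn n) ∧
    (Set.range (rowAnn n) ∪ Set.range (colAnn n)).ncard = 2 * n ∧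
    (∀ p, (Decomps x x p).Nonempty → (Decomps x x p).ncard = 1) :=
  Decomps_self' n hn x
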